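/- arXiv:1412.5707 — 4 statements merged into one kernel-verified Lean document; each statement's English description precedes it below -/
import Mathlib

section
/- Let T > 0 and let u : ℝ → ℝ be a measurable function that is integrable on [0,T]. Then lim_{p→0⁺} ∫₀ᵀ |u(t)|^p dt = m({t ∈ [0,T] : u(t) ≠ 0}), where m is Lebesgue measure. -/
open MeasureTheory

/-- for measurable `u` integrable on `[0,T]`,
`lim_{p→0⁺} ∫₀ᵀ |u(t)|^p dt = m {t ∈ [0,T] : u t ≠ 0}`. -/
theorem tendsto_lp_to_l0 (T : ℝ) (hT : 0 < T) (u : ℝ → ℝ) (hu : Measurable u)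
    (hint : IntegrableOn u (Set.Icc (0:ℝ) T)) :
    Filter.Tendsto (fun p : ℝ => ∫ t in Set.Icc (0:ℝ) T, |u t| ^ p)
      (nhdsWithin 0 (Set.Ioi (0:ℝ)))
      (nhds ((volume {t ∈ Set.Icc (0:ℝ) T | u t ≠ 0}).toReal)) := by
  have hmeas : MeasurableSet {t : ℝ | u t ≠ 0} :=
    (hu (measurableSet_singleton 0)).compl
  have hkey : Filter.Tendsto (fun p : ℝ => ∫ t in Set.Icc (0:ℝ) T, |u t| ^ p)
      (nhdsWithin 0 (Set.Ioi (0:ℝ)))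
      (nhds (∫ t in Set.Icc (0:ℝ) T,
        Set.indicator {t : ℝ | u t ≠ 0} (fun _ => (1:ℝ)) t)) := by
    apply tendsto_integral_filter_of_dominated_convergence (fun t => max 1 |u t|)
    · filter_upwards with p
      exact (hu.abs.pow measurable_const).aestronglyMeasurable
    · have h1 : ∀ᶠ p : ℝ in nhdsWithin 0 (Set.Ioi 0), p ∈ Set.Ioc (0:ℝ) 1 :=
        Ioc_mem_nhdsGT_of_mem (by norm_num)
      filter_upwards [h1] with p hp
      filter_upwards with t
      rw [Real.norm_eq_abs, abs_of_nonneg (Real.rpow_nonneg (abs_nonneg _) _)]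
      rcases le_or_gt |u t| 1 with h | h
      · exact le_max_of_le_left (Real.rpow_le_one (abs_nonneg _) h hp.1.le)
      · refine le_max_of_le_right ?_
        calc |u t| ^ p ≤ |u t| ^ (1:ℝ) :=
              Real.rpow_le_rpow_of_exponent_le h.le hp.2
          _ = |u t| := Real.rpow_one _
    · have h1 : IntegrableOn (fun _ : ℝ => (1:ℝ)) (Set.Icc (0:ℝ) T) volume :=
        integrableOn_const (by simp [Real.volume_Icc])
      have := h1.sup hint.abs
      simpa [Pi.sup_def, max_comm] using this
    · filter_upwards with t
      by_cases h : u t = 0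
      · have : ∀ᶠ p : ℝ in nhdsWithin 0 (Set.Ioi 0), |u t| ^ p = 0 := by
          filter_upwards [self_mem_nhdsWithin] with p hp
          rw [h, abs_zero, Real.zero_rpow (ne_of_gt hp)]
        rw [Set.indicator_of_notMem (by simp [h])]
        exact Filter.Tendsto.congr' (this.mono fun p hp => hp.symm) tendsto_const_nhds
      · rw [Set.indicator_of_mem (by simp [h])]
        have := (Real.continuousAt_const_rpow (a := |u t|) (b := 0)
          (abs_ne_zero.2 h)).tendsto
        rw [Real.rpow_zero] at this
        exact this.mono_left nhdsWithin_le_nhds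
  have heq : ∫ t in Set.Icc (0:ℝ) T,
      Set.indicator {t : ℝ | u t ≠ 0} (fun _ => (1:ℝ)) t
      = (volume {t ∈ Set.Icc (0:ℝ) T | u t ≠ 0}).toReal := by
    have hset : {t : ℝ | u t ≠ 0} ∩ Set.Icc (0:ℝ) T
        = {t ∈ Set.Icc (0:ℝ) T | u t ≠ 0} := by
      ext t; simp [Set.mem_sep_iff, and_comm]
    rw [show (fun _ : ℝ => (1:ℝ)) = (1 : ℝ → ℝ) from rfl,
      integral_indicator_one hmeas, measureReal_def, Measure.restrict_apply hmeas, hset]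
  rw [heq] at hkey
  exact hkey
end

section
/- (Lemma 5.5, existence part.) For every initial state ξ ∈ R(T), there exists an admissible control u* ∈ U(ξ) that minimizes the L¹ cost, i.e., ‖u*‖₁ ≤ ‖u‖₁ for all u ∈ U(ξ). -/
open MeasureTheory
open scoped ENNReal NNReal

noncomputable section

/-- A control: a measurable function with `|u t| ≤ 1` a.e. on `[0, T]`. -/
def IsControl (T : ℝ) (u : ℝ → ℝ) : Prop :=
  Measurable u ∧ ∀ᵐ t ∂(volume.restrict (Set.Icc (0:ℝ) T)), |u t| ≤ 1

/-- `∫₀ᵀ e^{−As} b u(s) ds`, the endpoint map of the system `dx/dt = Ax + bu`. -/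
def steer (n : ℕ) (A : Matrix (Fin n) (Fin n) ℝ) (b : Fin n → ℝ) (T : ℝ) (u : ℝ → ℝ) :
    Fin n → ℝ :=
  ∫ s in Set.Icc (0:ℝ) T, u s • (NormedSpace.exp (-(s • A))).mulVec b

/-- `L¹` norm of a control on `[0, T]`. -/
def L1norm (T : ℝ) (u : ℝ → ℝ) : ℝ := ∫ t in Set.Icc (0:ℝ) T, |u t|

/-- The support of `u`: closure of `{t ∈ [0,T] : u t ≠ 0}`. -/
def sparseSupp (T : ℝ) (u : ℝ → ℝ) : Set ℝ :=
  closure {t ∈ Set.Icc (0:ℝ) T | u t ≠ 0}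

/-- `L⁰` "norm": Lebesgue measure of the support. -/
def L0norm (T : ℝ) (u : ℝ → ℝ) : ℝ := (volume (sparseSupp T u)).toReal

/-- Admissible controls for initial state `ξ`: controls steering `ξ` to `0` at time `T`. -/
def Adm (n : ℕ) (A : Matrix (Fin n) (Fin n) ℝ) (b : Fin n → ℝ) (T : ℝ) (ξ : Fin n → ℝ) :
    Set (ℝ → ℝ) :=
  {u | IsControl T u ∧ ξ = -(steer n A b T u)}

/-- The reachable set `R(T)`. -/
def ReachSet (n : ℕ) (A : Matrix (Fin n) (Fin n) ℝ) (b : Fin n → ℝ) (T : ℝ) :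
    Set (Fin n → ℝ) :=
  {x | ∃ u, IsControl T u ∧ x = steer n A b T u}

/-- The set `R_α`. -/
def Rset (n : ℕ) (A : Matrix (Fin n) (Fin n) ℝ) (b : Fin n → ℝ) (T α : ℝ) :
    Set (Fin n → ℝ) :=
  {x | ∃ u, IsControl T u ∧ L1norm T u ≤ α ∧ x = steer n A b T u}

/-- Value function of the `L¹`-optimal control problem. -/
def V1 (n : ℕ) (A : Matrix (Fin n) (Fin n) ℝ) (b : Fin n → ℝ) (T : ℝ) (ξ : Fin n → ℝ) : ℝ :=
  sInf (L1norm T '' Adm n A b T ξ)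

/-- Value function of the sparse (`L⁰`) optimal control problem. -/
def V0 (n : ℕ) (A : Matrix (Fin n) (Fin n) ℝ) (b : Fin n → ℝ) (T : ℝ) (ξ : Fin n → ℝ) : ℝ :=
  sInf (L0norm T '' Adm n A b T ξ)

/-- Controllability of the pair `(A, b)`: `span {b, Ab, …, A^{n−1} b} = ℝⁿ`. -/
def Controllable (n : ℕ) (A : Matrix (Fin n) (Fin n) ℝ) (b : Fin n → ℝ) : Prop :=
  Submodule.span ℝ (Set.range fun i : Fin n => (A ^ (i : ℕ)).mulVec b) = ⊤


namespace ExL1Aux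


attribute [local instance] Matrix.linftyOpNormedRing Matrix.linftyOpNormedAlgebra

/-- restricted Lebesgue measure on `[0,T]` -/
abbrev Cμ (T : ℝ) : Measure ℝ := volume.restrict (Set.Icc (0:ℝ) T)

instance (T : ℝ) : IsFiniteMeasure (Cμ T) := by
  constructor
  rw [Measure.restrict_apply_univ]
  exact isCompact_Icc.measure_lt_top

variable {n : ℕ} (A : Matrix (Fin n) (Fin n) ℝ) (b : Fin n → ℝ) (T : ℝ)

def fvec (s : ℝ) : Fin n → ℝ := (NormedSpace.exp (-(s • A))).mulVec b

lemma contFvec : Continuous (fvec A b) := by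
  have h1 : Continuous fun s : ℝ => NormedSpace.exp (-(s • A)) :=
    NormedSpace.exp_continuous.comp ((continuous_id.smul continuous_const).neg)
  apply continuous_pi
  intro i
  simp only [fvec, Matrix.mulVec, dotProduct]
  exact continuous_finset_sum _ fun j _ =>
    ((continuous_apply j).comp ((continuous_apply i).comp h1)).mul continuous_const

lemma memℒp_fvec (i : Fin n) : MemLp (fun s => fvec A b s i) 2 (Cμ T) := by
  have hc : Continuous fun s => fvec A b s i := (continuous_apply i).comp (contFvec A b)
  obtain ⟨C, hC⟩ :=
    (isCompact_Icc (a := (0:ℝ)) (b := T)).exists_bound_of_continuousOn hc.continuousOn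
  refine (memLp_top_of_bound hc.aestronglyMeasurable C ?_).mono_exponent le_top
  exact (ae_restrict_iff' measurableSet_Icc).2 (ae_of_all _ hC)

lemma memℒp_of_bound {u : ℝ → ℝ} (hm : AEStronglyMeasurable u (Cμ T))
    (hb : ∀ᵐ t ∂(Cμ T), |u t| ≤ 1) : MemLp u 2 (Cμ T) :=
  (memLp_top_of_bound hm 1 (by simpa [Real.norm_eq_abs] using hb)).mono_exponent le_top

abbrev HS (T : ℝ) := Lp (α := ℝ) ℝ 2 (Cμ T)

lemma inner_eq (x y : HS T) : (inner ℝ x y : ℝ) = ∫ t, x t * y t ∂(Cμ T) := by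
  rw [L2.inner_def]
  simp [RCLike.inner_apply, starRingEnd_apply, mul_comm]

lemma integrable_Lp (x : HS T) : Integrable x (Cμ T) := (Lp.memLp x).integrable one_le_two

lemma integrable_mul (x y : HS T) : Integrable (fun t => x t * y t) (Cμ T) := by
  have := L2.integrable_inner (𝕜 := ℝ) x y
  simpa [RCLike.inner_apply, starRingEnd_apply, mul_comm] using this

lemma integrable_mul_of_bound {u g : ℝ → ℝ} (hu : AEStronglyMeasurable u (Cμ T))
    (hub : ∀ᵐ t ∂(Cμ T), |u t| ≤ 1) (hg : Integrable g (Cμ T)) :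
    Integrable (fun t => u t * g t) (Cμ T) := by
  refine hg.mono (hu.mul hg.1) ?_
  filter_upwards [hub] with t ht
  rw [Real.norm_eq_abs, Real.norm_eq_abs, abs_mul]
  exact mul_le_of_le_one_left (abs_nonneg _) ht

def jD (v : HS T) : WeakDual ℝ (HS T) :=
  StrongDual.toWeakDual (InnerProductSpace.toDual ℝ (HS T) v)

lemma jD_apply (v g : HS T) : jD T v g = ∫ t, v t * g t ∂(Cμ T) := by
  change InnerProductSpace.toDual ℝ (HS T) v g = _
  rw [InnerProductSpace.toDual_apply_apply, inner_eq]

lemma jD_apply_fun_left {v : ℝ → ℝ} (hv : MemLp v 2 (Cμ T)) (g : HS T) :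
    jD T (hv.toLp v) g = ∫ t, v t * g t ∂(Cμ T) := by
  rw [jD_apply]
  refine integral_congr_ae ?_
  filter_upwards [hv.coeFn_toLp] with t h1
  rw [h1]

lemma exists_rep (φ : WeakDual ℝ (HS T)) :
    ∃ v : HS T, ∀ g : HS T, φ g = ∫ t, v t * g t ∂(Cμ T) := by
  refine ⟨(InnerProductSpace.toDual ℝ (HS T)).symm (WeakDual.toStrongDual φ), fun g => ?_⟩
  rw [← inner_eq]
  exact (InnerProductSpace.toDual_symm_apply).symm


def Kset (T R : ℝ) : Set (WeakDual ℝ (HS T)) :=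
  {φ | ‖WeakDual.toStrongDual φ‖ ≤ R} ∩
    ⋂ (g : {g : HS T // ∀ᵐ t ∂(Cμ T), 0 ≤ (g : ℝ → ℝ) t}),
      ({φ | 0 ≤ φ g.1} ∩ {φ | φ g.1 ≤ ∫ t, (g.1 : ℝ → ℝ) t ∂(Cμ T)})

lemma isClosed_Kset (R : ℝ) : IsClosed (Kset T R) := by
  refine IsClosed.inter ?_ (isClosed_iInter fun g => IsClosed.inter ?_ ?_)
  · have h := WeakDual.isClosed_closedBall (E := HS T) (𝕜 := ℝ) 0 R
    convert h using 1
    ext φ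
    simp [Metric.mem_closedBall, dist_zero_right]
  · exact isClosed_Ici.preimage (WeakDual.eval_continuous g.1)
  · exact isClosed_Iic.preimage (WeakDual.eval_continuous g.1)

lemma isCompact_Kset (R : ℝ) : IsCompact (Kset T R) := by
  refine WeakDual.isCompact_of_bounded_of_closed ?_ (isClosed_Kset T R)
  refine (Metric.isBounded_closedBall (x := (0 : StrongDual ℝ (HS T))) (r := R)).subset ?_
  rintro φ ⟨h1, -⟩
  have h1' : ‖WeakDual.toStrongDual φ‖ ≤ R := h1
  simp only [Metric.mem_closedBall, dist_zero_right]
  exact h1'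

def Rb (T : ℝ) : ℝ := measureUnivNNReal (Cμ T) ^ (2 : ℝ≥0∞).toReal⁻¹ * 1

lemma mem_Kset {v : ℝ → ℝ} (hv : MemLp v 2 (Cμ T)) (h0 : ∀ᵐ t ∂(Cμ T), 0 ≤ v t)
    (h1 : ∀ᵐ t ∂(Cμ T), v t ≤ 1) : jD T (hv.toLp v) ∈ Kset T (Rb T) := by
  constructor
  · show ‖WeakDual.toStrongDual (jD T (hv.toLp v))‖ ≤ Rb T
    have he : ‖WeakDual.toStrongDual (jD T (hv.toLp v))‖ = ‖hv.toLp v‖ := by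
      change ‖InnerProductSpace.toDual ℝ (HS T) (hv.toLp v)‖ = _
      exact (InnerProductSpace.toDual ℝ (HS T)).norm_map _
    rw [he, Rb]
    refine Lp.norm_le_of_ae_bound zero_le_one ?_
    filter_upwards [hv.coeFn_toLp, h0, h1] with t ht h0t h1t
    rw [ht, Real.norm_eq_abs, abs_le]
    constructor <;> linarith
  · rw [Set.mem_iInter]
    rintro ⟨g, hg⟩
    have happ := jD_apply_fun_left T hv g
    constructor
    · show 0 ≤ jD T (hv.toLp v) g
      rw [happ]
      refine integral_nonneg_of_ae ?_
      filter_upwards [h0, hg] with t h0t hgt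
      exact mul_nonneg h0t hgt
    · show jD T (hv.toLp v) g ≤ _
      rw [happ]
      refine integral_mono_ae
        (integrable_mul_of_bound T hv.aestronglyMeasurable ?_ (integrable_Lp T g))
        (integrable_Lp T g) ?_
      · filter_upwards [h0, h1] with t h0t h1t
        rw [abs_le]; constructor <;> linarith
      · filter_upwards [h0, h1, hg] with t h0t h1t hgt
        simpa using mul_le_of_le_one_left hgt h1t

lemma rep_bounds {R : ℝ} {φ : WeakDual ℝ (HS T)} (hφ : φ ∈ Kset T R) {v : HS T}
    (hv : ∀ g : HS T, φ g = ∫ t, v t * g t ∂(Cμ T)) :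
    (∀ᵐ t ∂(Cμ T), 0 ≤ (v : ℝ → ℝ) t) ∧ (∀ᵐ t ∂(Cμ T), (v : ℝ → ℝ) t ≤ 1) := by
  have hset : ∀ s : Set ℝ, MeasurableSet s → Cμ T s < ⊤ →
      (0 ≤ ∫ t in s, v t ∂(Cμ T)) ∧ ∫ t in s, v t ∂(Cμ T) ≤ (Cμ T s).toReal := by
    intro s hs hμs
    set g : HS T := indicatorConstLp 2 hs hμs.ne (1:ℝ) with hgdef
    have hgco : (g : ℝ → ℝ) =ᵐ[Cμ T] s.indicator fun _ => (1:ℝ) := indicatorConstLp_coeFn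
    have hgpos : ∀ᵐ t ∂(Cμ T), 0 ≤ (g : ℝ → ℝ) t := by
      filter_upwards [hgco] with t ht
      rw [ht]
      exact Set.indicator_nonneg (fun _ _ => zero_le_one) t
    have hKg := Set.mem_iInter.1 hφ.2 ⟨g, hgpos⟩
    have hφg : φ g = ∫ t in s, v t ∂(Cμ T) := by
      rw [hv g, ← integral_indicator hs]
      refine integral_congr_ae ?_
      filter_upwards [hgco] with t ht
      rw [ht]
      by_cases hts : t ∈ s <;> simp [hts]
    have hIg : ∫ t, (g : ℝ → ℝ) t ∂(Cμ T) = (Cμ T s).toReal := by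
      rw [integral_congr_ae hgco, integral_indicator_const _ hs]
      simp [measureReal_def]
    exact ⟨hφg ▸ hKg.1, by rw [← hφg, ← hIg]; exact hKg.2⟩
  constructor
  · refine ae_nonneg_of_forall_setIntegral_nonneg (integrable_Lp T v) ?_
    intro s hs hμs
    exact (hset s hs hμs).1
  · have : ∀ᵐ t ∂(Cμ T), 0 ≤ 1 - (v : ℝ → ℝ) t := by
      refine ae_nonneg_of_forall_setIntegral_nonneg
        ((integrable_const (1:ℝ)).sub (integrable_Lp T v)) ?_
      intro s hs hμs
      rw [integral_sub (integrableOn_const (C := (1:ℝ)) hμs.ne) ((integrable_Lp T v).integrableOn),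
        setIntegral_const]
      have := (hset s hs hμs).2
      simp only [smul_eq_mul, mul_one, measureReal_def]
      linarith
    filter_upwards [this] with t ht
    linarith

lemma steer_apply {u : ℝ → ℝ} (hu : AEStronglyMeasurable u (Cμ T))
    (hb : ∀ᵐ t ∂(Cμ T), |u t| ≤ 1) (i : Fin n) :
    steer n A b T u i = ∫ t, u t * fvec A b t i ∂(Cμ T) := by
  have hF : Integrable (fvec A b) (Cμ T) := (contFvec A b).integrableOn_Icc
  have hint : Integrable (fun s => u s • fvec A b s) (Cμ T) := by
    refine hF.norm.mono' (hu.smul hF.1) ?_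
    filter_upwards [hb] with t ht
    rw [norm_smul, Real.norm_eq_abs]
    exact mul_le_of_le_one_left (norm_nonneg _) ht
  have h := (ContinuousLinearMap.proj (R := ℝ) (φ := fun _ : Fin n => ℝ) i).integral_comp_comm hint
  simp only [ContinuousLinearMap.proj_apply, Pi.smul_apply, smul_eq_mul] at h
  exact h.symm


def pPart (u : ℝ → ℝ) : ℝ → ℝ := fun t => max (u t) 0

def nPart (u : ℝ → ℝ) : ℝ → ℝ := fun t => max (-(u t)) 0

lemma pPart_sub_nPart (u : ℝ → ℝ) (t : ℝ) : pPart u t - nPart u t = u t := by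
  rcases le_total (u t) 0 with h | h
  · simp [pPart, nPart, max_eq_right h, max_eq_left (neg_nonneg.2 h)]
  · simp [pPart, nPart, max_eq_left h, max_eq_right (neg_nonpos.2 h)]

lemma pPart_add_nPart (u : ℝ → ℝ) (t : ℝ) : pPart u t + nPart u t = |u t| := by
  rcases le_total (u t) 0 with h | h
  · simp [pPart, nPart, max_eq_right h, max_eq_left (neg_nonneg.2 h), abs_of_nonpos h]
  · simp [pPart, nPart, max_eq_left h, max_eq_right (neg_nonpos.2 h), abs_of_nonneg h]

lemma pPart_nonneg (u : ℝ → ℝ) (t : ℝ) : 0 ≤ pPart u t := le_max_right _ _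

lemma nPart_nonneg (u : ℝ → ℝ) (t : ℝ) : 0 ≤ nPart u t := le_max_right _ _

lemma pPart_le_one (u : ℝ → ℝ) (t : ℝ) (h : |u t| ≤ 1) : pPart u t ≤ 1 :=
  max_le (le_trans (le_abs_self _) h) zero_le_one

lemma nPart_le_one (u : ℝ → ℝ) (t : ℝ) (h : |u t| ≤ 1) : nPart u t ≤ 1 :=
  max_le (le_trans (neg_le_abs _) h) zero_le_one

end ExL1Aux

open ExL1Aux

/-- Lemma 5.5, existence: every `ξ ∈ R(T)` has an `L¹`-optimal admissible control. -/
theorem exists_l1_optimal (T : ℝ) (hT : 0 < T) (n : ℕ) (hn : 1 ≤ n)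
    (A : Matrix (Fin n) (Fin n) ℝ) (b : Fin n → ℝ) :
    ∀ ξ ∈ ReachSet n A b T,
      ∃ ustar ∈ Adm n A b T ξ, ∀ u ∈ Adm n A b T ξ, L1norm T ustar ≤ L1norm T u := by
  classical
  intro ξ hξ
  obtain ⟨u₀, hu₀c, hξ₀⟩ := hξ
  have hsteer_neg : ∀ u : ℝ → ℝ, steer n A b T (fun t => -(u t)) = -(steer n A b T u) := by
    intro u
    unfold steer
    rw [← integral_neg]
    congr 1
    funext s
    rw [neg_smul]
  have hAdm0 : (fun t => -(u₀ t)) ∈ Adm n A b T ξ := by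
    refine ⟨⟨hu₀c.1.neg, ?_⟩, ?_⟩
    · filter_upwards [hu₀c.2] with t ht
      simpa using ht
    · rw [hsteer_neg u₀, neg_neg]
      exact hξ₀
  set fL : Fin n → HS T := fun i => (memℒp_fvec A b T i).toLp _ with hfLdef
  set oneL : HS T := (memLp_const (1:ℝ)).toLp _ with honeLdef
  set KK : Set (WeakDual ℝ (HS T) × WeakDual ℝ (HS T)) :=
    ((Kset T (Rb T)) ×ˢ (Kset T (Rb T))) ∩ {p | ∀ i, p.1 (fL i) - p.2 (fL i) = -ξ i} with hKKdef
  have hKKclosed : IsClosed {p : WeakDual ℝ (HS T) × WeakDual ℝ (HS T) |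
      ∀ i, p.1 (fL i) - p.2 (fL i) = -ξ i} := by
    rw [Set.setOf_forall]
    refine isClosed_iInter fun i => isClosed_eq ?_ continuous_const
    exact ((WeakDual.eval_continuous (fL i)).comp continuous_fst).sub
      ((WeakDual.eval_continuous (fL i)).comp continuous_snd)
  have hKKcomp : IsCompact KK :=
    ((isCompact_Kset T (Rb T)).prod (isCompact_Kset T (Rb T))).inter_right hKKclosed
  have key : ∀ u ∈ Adm n A b T ξ, ∃ p ∈ KK, p.1 oneL + p.2 oneL = L1norm T u := by
    intro u hu
    obtain ⟨⟨hum, hub⟩, hξu⟩ := hu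
    have hup_m : AEStronglyMeasurable (pPart u) (Cμ T) :=
      (hum.max measurable_const).aestronglyMeasurable
    have hun_m : AEStronglyMeasurable (nPart u) (Cμ T) :=
      (hum.neg.max measurable_const).aestronglyMeasurable
    have hup0 : ∀ᵐ t ∂(Cμ T), 0 ≤ pPart u t := ae_of_all _ fun t => pPart_nonneg u t
    have hun0 : ∀ᵐ t ∂(Cμ T), 0 ≤ nPart u t := ae_of_all _ fun t => nPart_nonneg u t
    have hup1 : ∀ᵐ t ∂(Cμ T), pPart u t ≤ 1 := by
      filter_upwards [hub] with t ht using pPart_le_one u t ht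
    have hun1 : ∀ᵐ t ∂(Cμ T), nPart u t ≤ 1 := by
      filter_upwards [hub] with t ht using nPart_le_one u t ht
    have hupb : ∀ᵐ t ∂(Cμ T), |pPart u t| ≤ 1 := by
      filter_upwards [hup1] with t h1
      rw [abs_le]
      exact ⟨by linarith [pPart_nonneg u t], h1⟩
    have hunb : ∀ᵐ t ∂(Cμ T), |nPart u t| ≤ 1 := by
      filter_upwards [hun1] with t h1
      rw [abs_le]
      exact ⟨by linarith [nPart_nonneg u t], h1⟩
    have hupℒ : MemLp (pPart u) 2 (Cμ T) := memℒp_of_bound T hup_m hupb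
    have hunℒ : MemLp (nPart u) 2 (Cμ T) := memℒp_of_bound T hun_m hunb
    refine ⟨(jD T (hupℒ.toLp _), jD T (hunℒ.toLp _)),
      ⟨⟨mem_Kset T hupℒ hup0 hup1, mem_Kset T hunℒ hun0 hun1⟩, ?_⟩, ?_⟩
    · intro i
      have e1 : jD T (hupℒ.toLp _) (fL i) = ∫ t, pPart u t * fvec A b t i ∂(Cμ T) := by
        rw [jD_apply_fun_left]
        refine integral_congr_ae ?_
        filter_upwards [(memℒp_fvec A b T i).coeFn_toLp] with t ht
        rw [ht]
      have e2 : jD T (hunℒ.toLp _) (fL i) = ∫ t, nPart u t * fvec A b t i ∂(Cμ T) := by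
        rw [jD_apply_fun_left]
        refine integral_congr_ae ?_
        filter_upwards [(memℒp_fvec A b T i).coeFn_toLp] with t ht
        rw [ht]
      have hfint : Integrable (fun t => fvec A b t i) (Cμ T) :=
        (memℒp_fvec A b T i).integrable one_le_two
      have hsub : ∫ t, pPart u t * fvec A b t i ∂(Cμ T)
          - ∫ t, nPart u t * fvec A b t i ∂(Cμ T) = ∫ t, u t * fvec A b t i ∂(Cμ T) := by
        rw [← integral_sub (integrable_mul_of_bound T hup_m hupb hfint)
          (integrable_mul_of_bound T hun_m hunb hfint)]
        refine integral_congr_ae (ae_of_all _ fun t => ?_)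
        simp only [← sub_mul, pPart_sub_nPart]
      show jD T (hupℒ.toLp _) (fL i) - jD T (hunℒ.toLp _) (fL i) = -ξ i
      rw [e1, e2, hsub, ← steer_apply A b T hum.aestronglyMeasurable hub i]
      have h := congrFun hξu i
      rw [Pi.neg_apply] at h
      linarith
    · have e1 : jD T (hupℒ.toLp _) oneL = ∫ t, pPart u t ∂(Cμ T) := by
        rw [jD_apply_fun_left]
        refine integral_congr_ae ?_
        filter_upwards [(memLp_const (1:ℝ)).coeFn_toLp] with t ht
        rw [ht, mul_one]
      have e2 : jD T (hunℒ.toLp _) oneL = ∫ t, nPart u t ∂(Cμ T) := by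
        rw [jD_apply_fun_left]
        refine integral_congr_ae ?_
        filter_upwards [(memLp_const (1:ℝ)).coeFn_toLp] with t ht
        rw [ht, mul_one]
      show jD T (hupℒ.toLp _) oneL + jD T (hunℒ.toLp _) oneL = L1norm T u
      rw [e1, e2, ← integral_add (hupℒ.integrable one_le_two) (hunℒ.integrable one_le_two)]
      refine integral_congr_ae (ae_of_all _ fun t => ?_)
      exact pPart_add_nPart u t
  obtain ⟨p0, hp0, hp0val⟩ := key _ hAdm0
  have hFcont : Continuous fun p : WeakDual ℝ (HS T) × WeakDual ℝ (HS T) =>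
      p.1 oneL + p.2 oneL :=
    ((WeakDual.eval_continuous oneL).comp continuous_fst).add
      ((WeakDual.eval_continuous oneL).comp continuous_snd)
  obtain ⟨pstar, hpstar, hmin⟩ := hKKcomp.exists_isMinOn ⟨p0, hp0⟩ hFcont.continuousOn
  obtain ⟨v, hv⟩ := exists_rep T pstar.1
  obtain ⟨w, hw⟩ := exists_rep T pstar.2
  obtain ⟨hv0, hv1⟩ := rep_bounds T hpstar.1.1 hv
  obtain ⟨hw0, hw1⟩ := rep_bounds T hpstar.1.2 hw
  have hd : AEMeasurable (fun t => (v : ℝ → ℝ) t - (w : ℝ → ℝ) t) (Cμ T) :=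
    (Lp.aestronglyMeasurable v).aemeasurable.sub (Lp.aestronglyMeasurable w).aemeasurable
  set ustar := hd.mk _ with hustardef
  have hueq : (fun t => (v : ℝ → ℝ) t - (w : ℝ → ℝ) t) =ᵐ[Cμ T] ustar := hd.ae_eq_mk
  have hub : ∀ᵐ t ∂(Cμ T), |ustar t| ≤ 1 := by
    filter_upwards [hueq, hv0, hv1, hw0, hw1] with t he h1 h2 h3 h4
    rw [← he, abs_le]
    constructor <;> linarith
  have hcontrol : IsControl T ustar := ⟨hd.measurable_mk, hub⟩
  have hsteer : ∀ i, steer n A b T ustar i = -ξ i := by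
    intro i
    rw [steer_apply A b T hd.measurable_mk.aestronglyMeasurable hub i]
    have e : ∫ t, ustar t * fvec A b t i ∂(Cμ T)
        = ∫ t, (v : ℝ → ℝ) t * (fL i : ℝ → ℝ) t ∂(Cμ T)
          - ∫ t, (w : ℝ → ℝ) t * (fL i : ℝ → ℝ) t ∂(Cμ T) := by
      rw [← integral_sub (integrable_mul T v (fL i)) (integrable_mul T w (fL i))]
      refine integral_congr_ae ?_
      filter_upwards [hueq, (memℒp_fvec A b T i).coeFn_toLp] with t he hf
      rw [← he, hf, sub_mul]
    rw [e, ← hv (fL i), ← hw (fL i)]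
    exact hpstar.2 i
  refine ⟨ustar, ⟨hcontrol, ?_⟩, ?_⟩
  · funext i
    rw [Pi.neg_apply, hsteer i, neg_neg]
  · intro u hu
    obtain ⟨q, hq, hqval⟩ := key u hu
    have e : pstar.1 oneL + pstar.2 oneL
        = ∫ t, ((v : ℝ → ℝ) t + (w : ℝ → ℝ) t) ∂(Cμ T) := by
      rw [hv oneL, hw oneL,
        ← integral_add (integrable_mul T v oneL) (integrable_mul T w oneL)]
      refine integral_congr_ae ?_
      filter_upwards [(memLp_const (1:ℝ)).coeFn_toLp] with t ht
      rw [ht, mul_one, mul_one]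
    have h1 : L1norm T ustar ≤ pstar.1 oneL + pstar.2 oneL := by
      rw [e]
      have hL : L1norm T ustar = ∫ t, |ustar t| ∂(Cμ T) := rfl
      rw [hL]
      refine integral_mono_ae
        ((memℒp_of_bound T hd.measurable_mk.aestronglyMeasurable hub).integrable
          one_le_two).abs
        ((integrable_Lp T v).add (integrable_Lp T w)) ?_
      filter_upwards [hueq, hv0, hw0] with t he h2 h3
      rw [← he, abs_le]
      constructor <;> linarith [abs_nonneg ((v : ℝ → ℝ) t - (w : ℝ → ℝ) t)]
    have h2 : pstar.1 oneL + pstar.2 oneL ≤ q.1 oneL + q.2 oneL := hmin hq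
    linarith [h1, h2, hqval.ge, hqval.le]



end
end

section
/- (Lemma 5.5, boundary part.) Let ξ ∈ R(T) and let u* ∈ U(ξ) be an L¹-optimal control for ξ (i.e., ‖u*‖₁ ≤ ‖u‖₁ for all u ∈ U(ξ)). Set θ = ‖u*‖₁. Then ξ belongs to the topological boundary ∂R_θ of the set R_θ. -/
open MeasureTheory

noncomputable section

lemma control_integrable {T : ℝ} {u : ℝ → ℝ} (h : IsControl T u) :
    IntegrableOn u (Set.Icc (0:ℝ) T) := by
  refine Integrable.mono' (integrable_const 1) h.1.aestronglyMeasurable ?_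
  filter_upwards [h.2] with t ht
  simpa [Real.norm_eq_abs] using ht

lemma L1norm_nonneg (T : ℝ) (u : ℝ → ℝ) : 0 ≤ L1norm T u :=
  integral_nonneg fun t => abs_nonneg _

lemma ae_zero_of_L1norm_zero {T : ℝ} {u : ℝ → ℝ} (h : IsControl T u)
    (h0 : L1norm T u = 0) :
    ∀ᵐ t ∂(volume.restrict (Set.Icc (0:ℝ) T)), u t = 0 := by
  have hint : Integrable (fun t => |u t|) (volume.restrict (Set.Icc (0:ℝ) T)) :=
    (control_integrable h).abs
  have := (integral_eq_zero_iff_of_nonneg (fun t => abs_nonneg (u t)) hint).mp h0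
  filter_upwards [this] with t ht
  exact abs_eq_zero.mp ht

lemma steer_eq_zero_of_L1norm_zero {n : ℕ} {A : Matrix (Fin n) (Fin n) ℝ}
    {b : Fin n → ℝ} {T : ℝ} {u : ℝ → ℝ} (h : IsControl T u) (h0 : L1norm T u = 0) :
    steer n A b T u = 0 := by
  unfold steer
  apply integral_eq_zero_of_ae
  filter_upwards [ae_zero_of_L1norm_zero h h0] with t ht
  simp [ht]

lemma steer_neg_mul (n : ℕ) (A : Matrix (Fin n) (Fin n) ℝ) (b : Fin n → ℝ) (T : ℝ)
    (c : ℝ) (u : ℝ → ℝ) :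
    steer n A b T (fun s => -(c * u s)) = -(c • steer n A b T u) := by
  unfold steer
  rw [← integral_smul, ← integral_neg]
  congr 1
  funext s
  rw [neg_smul, mul_smul]

lemma L1norm_neg_mul (T c : ℝ) (hc : 0 ≤ c) (u : ℝ → ℝ) :
    L1norm T (fun s => -(c * u s)) = c * L1norm T u := by
  unfold L1norm
  rw [← integral_const_mul]
  congr 1
  funext t
  rw [abs_neg, abs_mul, abs_of_nonneg hc]

/-- Lemma 5.5, boundary part: if `u*` is `L¹`-optimal for `ξ ∈ R(T)` and
`θ = ‖u*‖₁`, then `ξ ∈ ∂R_θ`. -/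
theorem optimal_on_frontier (T : ℝ) (hT : 0 < T) (n : ℕ) (hn : 1 ≤ n)
    (A : Matrix (Fin n) (Fin n) ℝ) (b : Fin n → ℝ)
    (ξ : Fin n → ℝ) (hξ : ξ ∈ ReachSet n A b T)
    (ustar : ℝ → ℝ) (hustar : ustar ∈ Adm n A b T ξ)
    (hopt : ∀ u ∈ Adm n A b T ξ, L1norm T ustar ≤ L1norm T u) :
    ξ ∈ frontier (Rset n A b T (L1norm T ustar)) := by
  classical
  obtain ⟨hctrl, hξeq⟩ := hustar
  set θ := L1norm T ustar with hθdef
  have hθ0 : 0 ≤ θ := L1norm_nonneg T ustar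
  -- ξ ∈ Rset θ, via the control -ustar
  have hmem : ξ ∈ Rset n A b T θ := by
    refine ⟨fun s => -((1:ℝ) * ustar s), ⟨(hctrl.1.const_mul 1).neg, ?_⟩, ?_, ?_⟩
    · filter_upwards [hctrl.2] with t ht
      simpa using ht
    · rw [L1norm_neg_mul T 1 zero_le_one, one_mul]
    · rw [steer_neg_mul, one_smul]
      exact hξeq
  refine ⟨subset_closure hmem, ?_⟩
  intro hin
  rcases eq_or_ne ξ 0 with h0 | h0
  · -- ξ = 0 case: then θ = 0 and Rset θ ⊆ {0}, which has empty interior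
    have hzadm : (fun _ : ℝ => (0:ℝ)) ∈ Adm n A b T ξ := by
      refine ⟨⟨measurable_const, ?_⟩, ?_⟩
      · filter_upwards with t; simp
      · rw [h0]; unfold steer; simp
    have hθle : θ ≤ L1norm T (fun _ => (0:ℝ)) := hopt _ hzadm
    have hL0 : L1norm T (fun _ : ℝ => (0:ℝ)) = 0 := by unfold L1norm; simp
    have hθ : θ = 0 := le_antisymm (by rw [← hL0]; exact hθle) hθ0
    have hsub : Rset n A b T θ ⊆ {0} := by
      rintro x ⟨u, hu, hL1, rfl⟩
      have hL1z : L1norm T u = 0 := le_antisymm (hθ ▸ hL1) (L1norm_nonneg T u)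
      simp [steer_eq_zero_of_L1norm_zero hu hL1z]
    obtain ⟨r, hr, hball⟩ := Metric.mem_nhds_iff.mp (mem_interior_iff_mem_nhds.mp hin)
    have hsub' : Metric.ball ξ r ⊆ {0} := hball.trans hsub
    set y : Fin n → ℝ := fun _ => r / 2 with hy
    haveI : Nonempty (Fin n) := ⟨⟨0, hn⟩⟩
    have hyball : y ∈ Metric.ball ξ r := by
      rw [h0, Metric.mem_ball, dist_zero_right, hy, pi_norm_const]
      rw [Real.norm_eq_abs, abs_of_pos (by linarith)]
      linarith
    have : y = 0 := hsub' hyball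
    have : y ⟨0, hn⟩ = 0 := by rw [this]; rfl
    rw [hy] at this
    simp at this
    linarith
  · -- ξ ≠ 0 case
    have hθpos : 0 < θ := by
      rcases lt_or_eq_of_le hθ0 with h | h
      · exact h
      · exfalso
        apply h0
        rw [hξeq, steer_eq_zero_of_L1norm_zero hctrl h.symm, neg_zero]
    obtain ⟨r, hr, hball⟩ := Metric.mem_nhds_iff.mp (mem_interior_iff_mem_nhds.mp hin)
    have hξn : 0 < ‖ξ‖ := norm_pos_iff.mpr h0
    set ε : ℝ := r / (2 * ‖ξ‖) with hε
    have hεpos : 0 < ε := div_pos hr (by positivity)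
    set p : Fin n → ℝ := (1 + ε) • ξ with hp
    have hpball : p ∈ Metric.ball ξ r := by
      rw [Metric.mem_ball, dist_eq_norm, hp]
      have : (1 + ε) • ξ - ξ = ε • ξ := by
        rw [add_smul, one_smul]; abel
      rw [this, norm_smul, Real.norm_eq_abs, abs_of_pos hεpos, hε]
      rw [div_mul_eq_mul_div, mul_comm (2:ℝ) ‖ξ‖, ← div_div, mul_div_assoc,
        div_self (ne_of_gt hξn), mul_one]
      linarith
    obtain ⟨u, hu, hL1u, hpu⟩ := hball hpball
    set c : ℝ := (1 + ε)⁻¹ with hc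
    have h1ε : (0:ℝ) < 1 + ε := by linarith
    have hcpos : 0 < c := inv_pos.mpr h1ε
    have hc1 : c < 1 := by
      rw [hc, inv_lt_one_iff₀]; right; linarith
    set v : ℝ → ℝ := fun s => -(c * u s) with hv
    have hvctrl : IsControl T v := by
      refine ⟨(hu.1.const_mul c).neg, ?_⟩
      filter_upwards [hu.2] with t ht
      rw [hv]
      calc |(-(c * u t))| = c * |u t| := by
            rw [abs_neg, abs_mul, abs_of_pos hcpos]
        _ ≤ 1 * 1 := mul_le_mul hc1.le ht (abs_nonneg _) zero_le_one
        _ = 1 := one_mul 1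
    have hvadm : v ∈ Adm n A b T ξ := by
      refine ⟨hvctrl, ?_⟩
      rw [hv, steer_neg_mul, ← hpu, hp, smul_smul, hc,
        inv_mul_cancel₀ (ne_of_gt h1ε), one_smul, neg_neg]
    have hvL1 : L1norm T v = c * L1norm T u := L1norm_neg_mul T c hcpos.le u
    have := hopt v hvadm
    rw [hvL1] at this
    have h1 : c * L1norm T u ≤ c * θ := mul_le_mul_of_nonneg_left hL1u hcpos.le
    have h2 : c * θ < θ := by nlinarith
    linarith


end
end

section
/- (Lemma 5.7.) Assume the pair (A, b) is controllable (span{b, Ab, …, A^{n−1}b} = ℝⁿ) and A is invertible. Then R_α ⊆ int R_β whenever 0 ≤ α < β ≤ T, where int denotes topological interior. -/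
open MeasureTheory

noncomputable section

namespace RsetAux

open Matrix NormedSpace

variable {n : ℕ} (A : Matrix (Fin n) (Fin n) ℝ) (b : Fin n → ℝ)

/-- The curve `s ↦ e^{-sA} b`. -/
def gcurve (s : ℝ) : Fin n → ℝ := (exp (-(s • A))).mulVec b

/-- `M ↦ M *ᵥ v` as a linear map. -/
def mvLin (v : Fin n → ℝ) : Matrix (Fin n) (Fin n) ℝ →ₗ[ℝ] (Fin n → ℝ) where
  toFun M := M.mulVec v
  map_add' M N := Matrix.add_mulVec M N v
  map_smul' a M := Matrix.smul_mulVec a M v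

/-- `v ↦ c ⬝ᵥ v` as a linear map. -/
def dotLin (c : Fin n → ℝ) : (Fin n → ℝ) →ₗ[ℝ] ℝ where
  toFun v := c ⬝ᵥ v
  map_add' v w := dotProduct_add (u := c) (v := v) (w := w)
  map_smul' a v := dotProduct_smul a c v

lemma gcurve_continuous : Continuous (gcurve A b) := by
  letI : SeminormedRing (Matrix (Fin n) (Fin n) ℝ) := Matrix.linftyOpSemiNormedRing
  letI : NormedRing (Matrix (Fin n) (Fin n) ℝ) := Matrix.linftyOpNormedRing
  letI : NormedAlgebra ℝ (Matrix (Fin n) (Fin n) ℝ) := Matrix.linftyOpNormedAlgebra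
  letI : NormedAlgebra ℚ (Matrix (Fin n) (Fin n) ℝ) := NormedAlgebra.restrictScalars ℚ ℝ _
  have h1 : Continuous fun s : ℝ => exp (-(s • A)) :=
    exp_continuous.comp ((continuous_id.smul continuous_const).neg)
  exact ((mvLin (n := n) b).continuous_of_finiteDimensional).comp h1

lemma dot_gcurve_continuous (c : Fin n → ℝ) :
    Continuous fun s => c ⬝ᵥ gcurve A b s := by
  letI : SeminormedRing (Matrix (Fin n) (Fin n) ℝ) := Matrix.linftyOpSemiNormedRing
  letI : NormedRing (Matrix (Fin n) (Fin n) ℝ) := Matrix.linftyOpNormedRing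
  letI : NormedAlgebra ℝ (Matrix (Fin n) (Fin n) ℝ) := Matrix.linftyOpNormedAlgebra
  exact ((dotLin (n := n) c).continuous_of_finiteDimensional).comp (gcurve_continuous A b)

lemma dot_abs_le (c v : Fin n → ℝ) : |c ⬝ᵥ v| ≤ (n : ℝ) * ‖c‖ * ‖v‖ := by
  calc |c ⬝ᵥ v| ≤ ∑ i, |c i * v i| := Finset.abs_sum_le_sum_abs _ _
    _ ≤ ∑ _i : Fin n, ‖c‖ * ‖v‖ := by
        refine Finset.sum_le_sum fun i _ => ?_
        rw [abs_mul]
        have h1 : |c i| ≤ ‖c‖ := by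
          simpa [Real.norm_eq_abs] using norm_le_pi_norm c i
        have h2 : |v i| ≤ ‖v‖ := by
          simpa [Real.norm_eq_abs] using norm_le_pi_norm v i
        exact mul_le_mul h1 h2 (abs_nonneg _) (norm_nonneg _)
    _ = (n : ℝ) * ‖c‖ * ‖v‖ := by
        rw [Finset.sum_const, Finset.card_univ, Fintype.card_fin]
        simp [mul_assoc]

/-- If `c ⬝ᵥ e^{-sA} b = 0` for all `s`, then `c = 0` (under controllability). -/
lemma key_vanish (hctrb : Submodule.span ℝ
      (Set.range fun i : Fin n => (A ^ (i : ℕ)).mulVec b) = ⊤)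
    {c : Fin n → ℝ} (H : ∀ s : ℝ, c ⬝ᵥ gcurve A b s = 0) : c = 0 := by
  letI : SeminormedRing (Matrix (Fin n) (Fin n) ℝ) := Matrix.linftyOpSemiNormedRing
  letI : NormedRing (Matrix (Fin n) (Fin n) ℝ) := Matrix.linftyOpNormedRing
  letI : NormedAlgebra ℝ (Matrix (Fin n) (Fin n) ℝ) := Matrix.linftyOpNormedAlgebra
  -- step 1: for all k, s : c ⬝ᵥ exp(s • (-A)) *ᵥ ((-A)^k *ᵥ b) = 0
  have step : ∀ k : ℕ, ∀ s : ℝ,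
      c ⬝ᵥ (exp (s • (-A))).mulVec (((-A) ^ k).mulVec b) = 0 := by
    intro k
    induction k with
    | zero =>
      intro s
      simpa [gcurve, Matrix.one_mulVec, smul_neg] using H s
    | succ k ih =>
      intro s
      set v : Fin n → ℝ := ((-A) ^ k).mulVec b with hv
      let L : Matrix (Fin n) (Fin n) ℝ →L[ℝ] ℝ :=
        LinearMap.toContinuousLinearMap ((dotLin c).comp (mvLin v))
      have hL : ∀ M : Matrix (Fin n) (Fin n) ℝ, L M = c ⬝ᵥ M.mulVec v := fun _ => rfl
      have hexp : HasDerivAt (fun t : ℝ => exp (t • (-A)))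
          (exp (s • (-A)) * (-A)) s := hasDerivAt_exp_smul_const (-A) s
      have hcomp : HasDerivAt (fun t : ℝ => L (exp (t • (-A))))
          (L (exp (s • (-A)) * (-A))) s := L.hasFDerivAt.comp_hasDerivAt s hexp
      have hzero : (fun t : ℝ => L (exp (t • (-A)))) = fun _ => (0 : ℝ) := by
        funext t
        rw [hL]
        exact ih t
      rw [hzero] at hcomp
      have hval : L (exp (s • (-A)) * (-A)) = 0 :=
        hcomp.unique (hasDerivAt_const s 0)
      rw [hL] at hval
      rw [← Matrix.mulVec_mulVec] at hval
      rw [show (-A).mulVec v = ((-A) ^ (k + 1)).mulVec b by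
        rw [hv, Matrix.mulVec_mulVec, ← pow_succ']] at hval
      exact hval
  -- step 2: at s = 0 : c ⬝ᵥ (-A)^k *ᵥ b = 0
  have step2 : ∀ k : ℕ, c ⬝ᵥ (A ^ k).mulVec b = 0 := by
    intro k
    have h0 := step k 0
    rw [zero_smul, exp_zero, Matrix.one_mulVec] at h0
    have hneg : (-A) ^ k = ((-1 : ℝ) ^ k) • A ^ k := by
      rw [show -A = (-1 : ℝ) • A by simp, smul_pow]
    rw [hneg, Matrix.smul_mulVec, dotProduct_smul] at h0
    exact (smul_eq_zero.mp h0).resolve_left (pow_ne_zero _ (by norm_num))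
  -- step 3: span argument
  have hle : Submodule.span ℝ (Set.range fun i : Fin n => (A ^ (i : ℕ)).mulVec b) ≤
      LinearMap.ker (dotLin c) := by
    rw [Submodule.span_le]
    rintro v ⟨i, rfl⟩
    exact step2 i
  rw [hctrb, top_le_iff] at hle
  have hc : c ∈ LinearMap.ker (dotLin c) := hle ▸ Submodule.mem_top
  exact dotProduct_self_eq_zero.mp (LinearMap.mem_ker.mp hc)

lemma dot_gcurve_analytic (c : Fin n → ℝ) :
    AnalyticOnNhd ℝ (fun s => c ⬝ᵥ gcurve A b s) Set.univ := by
  letI : SeminormedRing (Matrix (Fin n) (Fin n) ℝ) := Matrix.linftyOpSemiNormedRing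
  letI : NormedRing (Matrix (Fin n) (Fin n) ℝ) := Matrix.linftyOpNormedRing
  letI : NormedAlgebra ℝ (Matrix (Fin n) (Fin n) ℝ) := Matrix.linftyOpNormedAlgebra
  intro s _
  let L : Matrix (Fin n) (Fin n) ℝ →L[ℝ] ℝ :=
    LinearMap.toContinuousLinearMap ((dotLin c).comp (mvLin b))
  let e1 : ℝ →L[ℝ] Matrix (Fin n) (Fin n) ℝ := (ContinuousLinearMap.id ℝ ℝ).smulRight (-A)
  have heq : (fun s : ℝ => c ⬝ᵥ gcurve A b s) = fun s => L (exp (e1 s)) := by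
    funext t
    show c ⬝ᵥ (exp (-(t • A))).mulVec b = c ⬝ᵥ (exp (t • (-A))).mulVec b
    rw [smul_neg]
  rw [heq]
  exact (L.analyticAt _).comp ((exp_analytic _).comp (e1.analyticAt s))

lemma zero_set_null (hctrb : Submodule.span ℝ
      (Set.range fun i : Fin n => (A ^ (i : ℕ)).mulVec b) = ⊤)
    {c : Fin n → ℝ} (hc : c ≠ 0) (T : ℝ) :
    volume {s ∈ Set.Icc (0:ℝ) T | c ⬝ᵥ gcurve A b s = 0} = 0 := by
  by_contra hne
  set Z := {s ∈ Set.Icc (0:ℝ) T | c ⬝ᵥ gcurve A b s = 0} with hZ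
  have hZinf : Z.Infinite := by
    by_contra hfin
    rw [Set.not_infinite] at hfin
    exact hne (hfin.measure_zero _)
  obtain ⟨x₀, -, hacc⟩ := hZinf.exists_accPt_of_subset_isCompact isCompact_Icc
      (fun z hz => hz.1)
  rw [accPt_iff_frequently] at hacc
  have hfreq : ∃ᶠ s in nhdsWithin x₀ {x₀}ᶜ, c ⬝ᵥ gcurve A b s = 0 := by
    rw [frequently_nhdsWithin_iff]
    exact hacc.mono fun y hy => ⟨hy.2.2, Set.mem_compl_singleton_iff.mpr hy.1⟩
  have hEq := (dot_gcurve_analytic A b c).eqOn_zero_of_preconnected_of_frequently_eq_zero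
      isPreconnected_univ (Set.mem_univ x₀) hfreq
  exact hc (key_vanish A b hctrb fun s => hEq (Set.mem_univ s))

end RsetAux

open Matrix

/-- Lemma 5.7: under controllability and invertibility of `A`,
`R_α ⊆ int R_β` whenever `0 ≤ α < β ≤ T`. -/
theorem Rset_subset_interior (T : ℝ) (hT : 0 < T) (n : ℕ) (hn : 1 ≤ n)
    (A : Matrix (Fin n) (Fin n) ℝ) (b : Fin n → ℝ)
    (hctrb : Controllable n A b) (hA : IsUnit A) :
    ∀ α β : ℝ, 0 ≤ α → α < β → β ≤ T →
      Rset n A b T α ⊆ interior (Rset n A b T β) := by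
  intro α β hα hαβ hβT x hx
  obtain ⟨u, ⟨humeas, hubd⟩, huL1, hxeq⟩ := hx
  have hctrb' : Submodule.span ℝ
      (Set.range fun i : Fin n => (A ^ (i : ℕ)).mulVec b) = ⊤ := hctrb
  set g : ℝ → Fin n → ℝ := RsetAux.gcurve A b with hgdef
  have hgc : Continuous g := RsetAux.gcurve_continuous A b
  have hsteerdef : ∀ v : ℝ → ℝ, steer n A b T v = ∫ s in Set.Icc (0:ℝ) T, v s • g s :=
    fun v => rfl
  unfold L1norm at huL1
  have hαT : α < T := lt_of_lt_of_le hαβ hβT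
  set θ : ℝ := (α / T + 1) / 2 with hθdef
  have hαT0 : 0 ≤ α / T := div_nonneg hα hT.le
  have hθpos : 0 < θ := by rw [hθdef]; linarith
  have hθ1 : θ < 1 := by
    have : α / T < 1 := (div_lt_one hT).mpr hαT
    rw [hθdef]; linarith
  have hαTθ : α < T * θ := by
    have h1 : T * θ = (α + T) / 2 := by rw [hθdef]; field_simp
    rw [h1]; linarith
  -- the sets E (where |u| is large) and F (its complement in [0,T])
  set E : Set ℝ := Set.Icc (0:ℝ) T ∩ {t | θ < |u t|} with hEdef
  set F : Set ℝ := Set.Icc (0:ℝ) T \ E with hFdef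
  have hEm : MeasurableSet E :=
    measurableSet_Icc.inter (measurableSet_lt measurable_const humeas.abs)
  have hFm : MeasurableSet F := measurableSet_Icc.diff hEm
  have hFsub : F ⊆ Set.Icc (0:ℝ) T := Set.diff_subset
  have hFmem : ∀ t ∈ F, |u t| ≤ θ := by
    intro t ht
    by_contra hgt
    exact ht.2 ⟨ht.1, lt_of_not_ge hgt⟩
  have hIccvol : volume (Set.Icc (0:ℝ) T) = ENNReal.ofReal T := by
    rw [Real.volume_Icc, sub_zero]
  have hIccfin : volume (Set.Icc (0:ℝ) T) ≠ ⊤ := by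
    rw [hIccvol]; exact ENNReal.ofReal_ne_top
  have huInt : IntegrableOn (fun t => |u t|) (Set.Icc (0:ℝ) T) := by
    refine Integrable.mono'
      (integrableOn_const (by rw [hIccvol]; exact ENNReal.ofReal_ne_top) :
        IntegrableOn (fun _ => (1:ℝ)) _ _)
      humeas.abs.aestronglyMeasurable ?_
    filter_upwards [hubd] with t ht
    rwa [Real.norm_eq_abs, abs_abs]
  have hEfin : volume E ≠ ⊤ :=
    ne_top_of_le_ne_top hIccfin (measure_mono Set.inter_subset_left)
  -- Chebyshev
  have hE1 : θ * (volume E).toReal ≤ α := by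
    have h1 : ∫ t in E, θ ≤ ∫ t in E, |u t| := by
      refine setIntegral_mono_on (integrableOn_const hEfin)
        (huInt.mono_set Set.inter_subset_left) hEm (fun t ht => le_of_lt ht.2)
    have h2 : ∫ t in E, |u t| ≤ ∫ t in Set.Icc (0:ℝ) T, |u t| :=
      setIntegral_mono_set huInt (ae_of_all _ fun t => abs_nonneg _)
        (HasSubset.Subset.eventuallyLE Set.inter_subset_left)
    have h3 : ∫ t in E, (θ:ℝ) = (volume E).toReal * θ := by
      rw [setIntegral_const, smul_eq_mul]; rfl
    linarith [mul_comm θ (volume E).toReal]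
  have hEle : volume E ≤ ENNReal.ofReal (α / θ) := by
    rw [← ENNReal.ofReal_toReal hEfin]
    apply ENNReal.ofReal_le_ofReal
    rw [le_div_iff₀ hθpos]
    linarith [mul_comm (volume E).toReal θ]
  have hFeq : volume F = volume (Set.Icc (0:ℝ) T) - volume E :=
    measure_diff Set.inter_subset_left hEm.nullMeasurableSet hEfin
  have hFge : ENNReal.ofReal (T - α / θ) ≤ volume F := by
    rw [hFeq, hIccvol]
    calc ENNReal.ofReal (T - α/θ) = ENNReal.ofReal T - ENNReal.ofReal (α/θ) :=
          ENNReal.ofReal_sub T (div_nonneg hα hθpos.le)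
    _ ≤ ENNReal.ofReal T - volume E := tsub_le_tsub_left hEle _
  have hαθT : α / θ < T := by
    rw [div_lt_iff₀ hθpos]; linarith [hαTθ, mul_comm T θ]
  have hFpos : 0 < volume F :=
    lt_of_lt_of_le (ENNReal.ofReal_pos.mpr (by linarith)) hFge
  have hFfin : volume F ≠ ⊤ := ne_top_of_le_ne_top hIccfin (measure_mono hFsub)
  have hFtoReal : (volume F).toReal ≤ T := by
    have h1 : volume F ≤ ENNReal.ofReal T := by rw [← hIccvol]; exact measure_mono hFsub
    calc (volume F).toReal ≤ (ENNReal.ofReal T).toReal :=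
          ENNReal.toReal_mono ENNReal.ofReal_ne_top h1
    _ = T := ENNReal.toReal_ofReal hT.le
  -- the Gramian-type map Φ
  have hgiF : ∀ c : Fin n → ℝ, IntegrableOn (fun s => (c ⬝ᵥ g s) • g s) F := fun c =>
    (((RsetAux.dot_gcurve_continuous A b c).smul hgc).integrableOn_Icc).mono_set hFsub
  set Φ : (Fin n → ℝ) →ₗ[ℝ] (Fin n → ℝ) :=
    { toFun := fun c => ∫ s in F, (c ⬝ᵥ g s) • g s
      map_add' := by
        intro c d
        simp only [add_dotProduct, add_smul]
        exact integral_add (hgiF c) (hgiF d)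
      map_smul' := by
        intro a c
        simp only [smul_dotProduct, RingHom.id_apply, smul_eq_mul]
        rw [← integral_smul]
        congr 1
        funext s
        rw [mul_smul] } with hΦdef
  have hΦapp : ∀ c : Fin n → ℝ, Φ c = ∫ s in F, (c ⬝ᵥ g s) • g s := fun c => rfl
  have hdotInt : ∀ c d : Fin n → ℝ, d ⬝ᵥ (Φ c) = ∫ s in F, (d ⬝ᵥ g s) * (c ⬝ᵥ g s) := by
    intro c d
    have h1 : d ⬝ᵥ (Φ c) =
        (LinearMap.toContinuousLinearMap (RsetAux.dotLin d)) (∫ s in F, (c ⬝ᵥ g s) • g s) := rfl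
    rw [h1, ← ContinuousLinearMap.integral_comp_comm _ (hgiF c)]
    congr 1
    funext s
    show d ⬝ᵥ ((c ⬝ᵥ g s) • g s) = (d ⬝ᵥ g s) * (c ⬝ᵥ g s)
    rw [dotProduct_smul, smul_eq_mul, mul_comm]
  have hker : ∀ c, Φ c = 0 → c = 0 := by
    intro c hc0
    by_contra hc
    have hZ : volume {s ∈ Set.Icc (0:ℝ) T | c ⬝ᵥ g s = 0} = 0 :=
      RsetAux.zero_set_null A b hctrb' hc T
    have hfpos : 0 < ∫ s in F, (c ⬝ᵥ g s) * (c ⬝ᵥ g s) := by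
      rw [setIntegral_pos_iff_support_of_nonneg_ae (ae_of_all _ fun s => mul_self_nonneg _)
        ((((RsetAux.dot_gcurve_continuous A b c).mul
          (RsetAux.dot_gcurve_continuous A b c)).integrableOn_Icc).mono_set hFsub)]
      have hsub2 : F ⊆ (Function.support (fun s => (c ⬝ᵥ g s) * (c ⬝ᵥ g s)) ∩ F) ∪
          {s ∈ Set.Icc (0:ℝ) T | c ⬝ᵥ g s = 0} := by
        intro s hs
        by_cases h0 : c ⬝ᵥ g s = 0
        · exact Or.inr ⟨hFsub hs, h0⟩
        · exact Or.inl ⟨mul_self_ne_zero.mpr h0, hs⟩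
      have h11 := (measure_mono hsub2).trans (measure_union_le (μ := volume) _ _)
      rw [hZ, add_zero] at h11
      exact lt_of_lt_of_le hFpos h11
    rw [← hdotInt c c, hc0, dotProduct_zero] at hfpos
    exact lt_irrefl 0 hfpos
  have hinj : Function.Injective Φ := by
    rw [← LinearMap.ker_eq_bot]
    exact LinearMap.ker_eq_bot'.mpr hker
  obtain ⟨K, hK0, hKsol⟩ : ∃ K : ℝ, 0 < K ∧
      ∀ z : Fin n → ℝ, ∃ cz : Fin n → ℝ, Φ cz = z ∧ ‖cz‖ ≤ K * ‖z‖ := by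
    have hsurj := (LinearMap.injective_iff_surjective).mp hinj
    let Φe := LinearEquiv.ofBijective Φ ⟨hinj, hsurj⟩
    let Linv : (Fin n → ℝ) →L[ℝ] (Fin n → ℝ) :=
      LinearMap.toContinuousLinearMap (Φe.symm : (Fin n → ℝ) →ₗ[ℝ] (Fin n → ℝ))
    refine ⟨‖Linv‖ + 1, by linarith [norm_nonneg Linv],
      fun z => ⟨Φe.symm z, Φe.apply_symm_apply z, ?_⟩⟩
    calc ‖Φe.symm z‖ = ‖Linv z‖ := rfl
    _ ≤ ‖Linv‖ * ‖z‖ := Linv.le_opNorm z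
    _ ≤ (‖Linv‖ + 1) * ‖z‖ := mul_le_mul_of_nonneg_right (by linarith) (norm_nonneg z)
  obtain ⟨G, hG⟩ := isCompact_Icc.exists_bound_of_continuousOn hgc.continuousOn
  set C : ℝ := (n : ℝ) * max G 0 + 1 with hCdef
  have hC0 : 0 < C := by rw [hCdef]; positivity
  have hdotb : ∀ s ∈ Set.Icc (0:ℝ) T, ∀ c : Fin n → ℝ, |c ⬝ᵥ g s| ≤ C * ‖c‖ := by
    intro s hs c
    calc |c ⬝ᵥ g s| ≤ (n:ℝ) * ‖c‖ * ‖g s‖ := RsetAux.dot_abs_le c (g s)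
    _ ≤ (n:ℝ) * ‖c‖ * max G 0 :=
        mul_le_mul_of_nonneg_left (le_trans (hG s hs) (le_max_left _ _)) (by positivity)
    _ ≤ C * ‖c‖ := by
        rw [hCdef]
        nlinarith [norm_nonneg c, le_max_right G 0, Nat.cast_nonneg (α := ℝ) n]
  obtain ⟨δ, hδ0, hw1, hw2⟩ : ∃ δ : ℝ, 0 < δ ∧
      C * (K * δ) ≤ 1 - θ ∧ C * (K * δ) ≤ (β - α) / T := by
    have hmin0 : 0 < min (1 - θ) ((β - α) / T) :=
      lt_min (by linarith) (div_pos (by linarith) hT)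
    have hCK : (0:ℝ) < C * K := mul_pos hC0 hK0
    have heq : C * (K * (min (1 - θ) ((β - α) / T) / (C * K))) =
        min (1 - θ) ((β - α) / T) := by
      rw [← mul_assoc, mul_comm (C * K), div_mul_cancel₀ _ (ne_of_gt hCK)]
    exact ⟨min (1 - θ) ((β - α) / T) / (C * K), div_pos hmin0 hCK,
      heq.le.trans (min_le_left _ _), heq.le.trans (min_le_right _ _)⟩
  -- the ball
  rw [mem_interior]
  refine ⟨Metric.ball x δ, ?_, Metric.isOpen_ball, Metric.mem_ball_self hδ0⟩
  intro y hy
  set z : Fin n → ℝ := y - x with hzdef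
  have hz : ‖z‖ < δ := by
    rw [hzdef, ← dist_eq_norm]
    exact Metric.mem_ball.mp hy
  obtain ⟨c, hΦc, hcKz⟩ := hKsol z
  have hcK : ‖c‖ ≤ K * δ := hcKz.trans (mul_le_mul_of_nonneg_left hz.le hK0.le)
  set w : ℝ → ℝ := F.indicator (fun s => c ⬝ᵥ g s) with hwdef
  have hwmeas : Measurable w :=
    ((RsetAux.dot_gcurve_continuous A b c).measurable).indicator hFm
  have hwb : ∀ s ∈ Set.Icc (0:ℝ) T, |c ⬝ᵥ g s| ≤ C * (K * δ) := fun s hs =>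
    le_trans (hdotb s hs c) (mul_le_mul_of_nonneg_left hcK hC0.le)
  refine ⟨fun t => u t + w t, ⟨humeas.add hwmeas, ?_⟩, ?_, ?_⟩
  · -- a.e. bound
    filter_upwards [hubd, ae_restrict_mem measurableSet_Icc] with t ht htI
    by_cases htF : t ∈ F
    · have h1 : |u t| ≤ θ := hFmem t htF
      have h2 : |w t| ≤ 1 - θ := by
        rw [hwdef, Set.indicator_of_mem htF]
        exact le_trans (hwb t htI) hw1
      calc |u t + w t| ≤ |u t| + |w t| := abs_add_le _ _
      _ ≤ 1 := by linarith
    · rw [hwdef, Set.indicator_of_notMem htF, add_zero]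
      exact ht
  · -- L1 bound
    have hwabs : (fun t => |w t|) = F.indicator (fun s => |c ⬝ᵥ g s|) := by
      funext t
      by_cases htF : t ∈ F <;>
        simp [hwdef, Set.indicator_of_mem, Set.indicator_of_notMem, htF]
    have hwInt : IntegrableOn (fun t => |w t|) (Set.Icc (0:ℝ) T) := by
      rw [hwabs]
      exact ((((RsetAux.dot_gcurve_continuous A b c).abs).integrableOn_Icc.mono_set
        hFsub).integrable_indicator hFm).integrableOn
    have hvInt : IntegrableOn (fun t => |u t + w t|) (Set.Icc (0:ℝ) T) := by
      refine Integrable.mono' (huInt.add hwInt)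
        ((humeas.add hwmeas).abs.aestronglyMeasurable) (ae_of_all _ fun t => ?_)
      rw [Real.norm_eq_abs, abs_abs]
      exact abs_add_le _ _
    have h5 : L1norm T (fun t => u t + w t) ≤
        (∫ t in Set.Icc (0:ℝ) T, |u t|) + ∫ t in Set.Icc (0:ℝ) T, |w t| := by
      unfold L1norm
      rw [← integral_add huInt hwInt]
      exact integral_mono hvInt (huInt.add hwInt) fun t => abs_add_le _ _
    have h6 : ∫ t in Set.Icc (0:ℝ) T, |w t| ≤ β - α := by
      rw [hwabs, setIntegral_indicator hFm, Set.inter_eq_self_of_subset_right hFsub]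
      have h7 : ∫ s in F, |c ⬝ᵥ g s| ≤ ∫ s in F, C * (K * δ) := by
        refine setIntegral_mono_on
          (((RsetAux.dot_gcurve_continuous A b c).abs).integrableOn_Icc.mono_set hFsub)
          (integrableOn_const hFfin) hFm fun s hs => hwb s (hFsub hs)
      have h8 : ∫ _s in F, C * (K * δ) = (volume F).toReal * (C * (K * δ)) := by
        rw [setIntegral_const, smul_eq_mul]; rfl
      have h9 : (volume F).toReal * (C * (K * δ)) ≤ T * ((β - α) / T) :=
        mul_le_mul hFtoReal hw2 (mul_nonneg hC0.le (mul_nonneg hK0.le hδ0.le)) hT.le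
      have h10 : T * ((β - α) / T) = β - α := by
        rw [mul_comm, div_mul_cancel₀ _ (ne_of_gt hT)]
      calc ∫ s in F, |c ⬝ᵥ g s| ≤ ∫ s in F, C * (K * δ) := h7
      _ = (volume F).toReal * (C * (K * δ)) := h8
      _ ≤ T * ((β - α) / T) := h9
      _ = β - α := h10
    linarith
  · -- endpoint
    have hugInt : IntegrableOn (fun s => u s • g s) (Set.Icc (0:ℝ) T) := by
      refine Integrable.mono'
        (integrableOn_const (by rw [hIccvol]; exact ENNReal.ofReal_ne_top) :
          IntegrableOn (fun _ => max G 0) _ _)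
        ((humeas.smul hgc.measurable).aestronglyMeasurable) ?_
      filter_upwards [hubd, ae_restrict_mem measurableSet_Icc] with s hs hsI
      rw [norm_smul, Real.norm_eq_abs]
      calc |u s| * ‖g s‖ ≤ 1 * max G 0 :=
        mul_le_mul hs (le_trans (hG s hsI) (le_max_left _ _)) (norm_nonneg _) zero_le_one
      _ = max G 0 := one_mul _
    have hwg : (fun s => w s • g s) = F.indicator (fun s => (c ⬝ᵥ g s) • g s) := by
      funext s
      by_cases hsF : s ∈ F <;>
        simp [hwdef, Set.indicator_of_mem, Set.indicator_of_notMem, hsF]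
    have hwgInt : IntegrableOn (fun s => w s • g s) (Set.Icc (0:ℝ) T) := by
      rw [hwg]
      exact ((hgiF c).integrable_indicator hFm).integrableOn
    have hlast : ∫ s in Set.Icc (0:ℝ) T, w s • g s = z := by
      rw [hwg, setIntegral_indicator hFm, Set.inter_eq_self_of_subset_right hFsub,
        ← hΦapp c]
      exact hΦc
    have hfinal : steer n A b T (fun t => u t + w t) = x + z := by
      rw [hsteerdef]
      rw [show (fun s => (u s + w s) • g s) = fun s => u s • g s + w s • g s from
        funext fun s => add_smul _ _ _]
      rw [integral_add hugInt hwgInt, hlast, ← hsteerdef, ← hxeq]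
    rw [hfinal, hzdef, add_sub_cancel]
end
end
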